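/- Let (Γ(L₁), {,}₁) and (Γ(L₂), {,}₂) be Jacobi structures and B : L₁ → L₂ a factor (regular line bundle morphism) covering φ : M₁ → M₂, with pull-back B* : Γ(L₂) → Γ(L₁) defined by (B*s)(x) = B_x^{-1}(s(φ(x))). Then B is a Jacobi map (B*{s,r}₂ = {B*s, B*r}₁ for all s,r) if and only if the sections P₁*B*s − P₂*s, for s ∈ Γ(L₂), span a Lie subalgebra of the product Jacobi structure on L₁ ⋉ conj(L₂), i.e. the lgraph of B is coisotropic. -/
import Mathlib


/-- Jacobi maps as coisotropic relations: let `(A₁,br₁)` and `(A₂,br₂)` be the section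
spaces of two Jacobi structures, `Bstar` the pull-back of a factor `B`, and `C` the
sections of the line product `L₁ ⋉ conj(L₂)` carrying the product Jacobi bracket `brC`
characterized on pull-backs `p₁, p₂` by `brC(p₁s,p₁s') = p₁(br₁ s s')`,
`brC(p₂s,p₂s') = −p₂(br₂ s s')`, `brC(p₁s,p₂r) = 0` (opposite structure on the second
factor). Then `B` is a Jacobi map (`Bstar(br₂ s s') = br₁(Bstar s)(Bstar s')`) iff the
sections `p₁(Bstar s) − p₂ s` span a Lie subalgebra, i.e. the lgraph of `B` is
coisotropic. -/
theorem stmt16 (A1 A2 C : Type*)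
    [AddCommGroup A1] [Module ℝ A1] [AddCommGroup A2] [Module ℝ A2]
    [AddCommGroup C] [Module ℝ C]
    (br1 : A1 →ₗ[ℝ] A1 →ₗ[ℝ] A1) (br2 : A2 →ₗ[ℝ] A2 →ₗ[ℝ] A2)
    (Bstar : A2 →ₗ[ℝ] A1)
    (p1 : A1 →ₗ[ℝ] C) (p2 : A2 →ₗ[ℝ] C)
    (brC : C →ₗ[ℝ] C →ₗ[ℝ] C)
    (h11 : ∀ s s', brC (p1 s) (p1 s') = p1 (br1 s s'))
    (h22 : ∀ s s', brC (p2 s) (p2 s') = - p2 (br2 s s'))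
    (h12 : ∀ s r, brC (p1 s) (p2 r) = 0)
    (h21 : ∀ r s, brC (p2 r) (p1 s) = 0)
    (hindep : ∀ (a : A1) (b : A2), p1 a = p2 b → a = 0 ∧ b = 0) :
    (∀ s s' : A2, Bstar (br2 s s') = br1 (Bstar s) (Bstar s')) ↔
    (∀ s s' : A2,
      brC (p1 (Bstar s) - p2 s) (p1 (Bstar s') - p2 s')
        ∈ Submodule.span ℝ (Set.range fun r : A2 => p1 (Bstar r) - p2 r)) := by
  -- the graph map as a linear map
  set f : A2 →ₗ[ℝ] C := p1.comp Bstar - p2 with hf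
  have hfapp : ∀ r : A2, f r = p1 (Bstar r) - p2 r := fun r => rfl
  have hrange : (Set.range fun r : A2 => p1 (Bstar r) - p2 r) = ↑(LinearMap.range f) := by
    ext x; simp [hfapp, LinearMap.mem_range, Set.mem_range, eq_comm]
  have hspan : Submodule.span ℝ (Set.range fun r : A2 => p1 (Bstar r) - p2 r)
      = LinearMap.range f := by rw [hrange, Submodule.span_eq]
  -- key computation of the bracket
  have hcomp : ∀ s s' : A2,
      brC (p1 (Bstar s) - p2 s) (p1 (Bstar s') - p2 s')
        = p1 (br1 (Bstar s) (Bstar s')) - p2 (br2 s s') := by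
    intro s s'
    simp only [map_sub, LinearMap.sub_apply, h11, h22, h12, h21]
    abel
  constructor
  · intro hJ s s'
    rw [hspan, hcomp s s']
    exact ⟨br2 s s', by rw [hfapp, hJ s s']⟩
  · intro hC s s'
    have := hC s s'
    rw [hspan, hcomp s s'] at this
    obtain ⟨r, hr⟩ := this
    rw [hfapp] at hr
    -- p1 (Bstar r - br1 ..) = p2 (r - br2 s s')
    have heq : p1 (Bstar r - br1 (Bstar s) (Bstar s')) = p2 (r - br2 s s') := by
      simp only [map_sub]
      have := hr
      abel_nf
      abel_nf at this
      linear_combination (norm := abel) this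
    obtain ⟨h1, h2⟩ := hindep _ _ heq
    have hr2 : r = br2 s s' := by
      have := sub_eq_zero.mp h2; exact this
    have h1' : Bstar r = br1 (Bstar s) (Bstar s') := sub_eq_zero.mp h1
    rw [← hr2]; exact h1'
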